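/- Let k ≥ 1, t ≥ 1, and n ≥ 2. Then γ_{[k]R}(C_{8t} □ P_n) ≤ t(2n(k+1) − (⌊(n−2)/5⌋ + ⌊n/5⌋) + 2k). -/

import Mathlib

open Finset
open scoped Classical

/-- The cylindrical grid `C_m □ P_n`: the Cartesian (box) product of the
cycle on `m` vertices with the path on `n` vertices. -/
def cylGrid (m n : ℕ) : SimpleGraph (Fin m × Fin n) :=
  (SimpleGraph.cycleGraph m).boxProd (SimpleGraph.pathGraph n)

/-- `f : V → ℕ` is a `[k]`-Roman dominating function on `G`:
values lie in `{0,…,k+1}`, and every vertex `v` with `f v < k` satisfies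
`f(N[v]) ≥ k + |AN(v)|`, where `AN(v)` is the set of neighbors of `v`
with positive label. -/
def IsKRomanDF {V : Type*} [Fintype V] (G : SimpleGraph V) (k : ℕ) (f : V → ℕ) : Prop :=
  (∀ v, f v ≤ k + 1) ∧
  (∀ v, f v < k →
    k + (Finset.univ.filter fun u => G.Adj v u ∧ 0 < f u).card ≤
      f v + ∑ u ∈ Finset.univ.filter (fun u => G.Adj v u), f u)

/-- The `[k]`-Roman domination number: the minimum total weight of a
`[k]`-Roman dominating function. -/
noncomputable def gammaKR {V : Type*} [Fintype V] (G : SimpleGraph V) (k : ℕ) : ℕ :=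
  sInf { w : ℕ | ∃ f : V → ℕ, IsKRomanDF G k f ∧ w = ∑ v, f v }

/-- The packing number: the maximum cardinality of a set of vertices whose
closed neighborhoods are pairwise disjoint. -/
noncomputable def packingNumber {V : Type*} [Fintype V] (G : SimpleGraph V) : ℕ :=
  sSup { w : ℕ | ∃ D : Set V,
    (D.Pairwise fun u v =>
      Disjoint (insert u (G.neighborSet u)) (insert v (G.neighborSet v))) ∧
    w = D.ncard }

lemma sum_ite_ite {α : Type*} (s : Finset α) (p q : α → Prop) [DecidablePred p]
    [DecidablePred q] (A B : ℕ) :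
    ∑ r ∈ s, (if p r then A else if q r then B else 0)
      = A * (s.filter p).card + B * (s.filter fun r => ¬ p r ∧ q r).card := by
  have hpt : ∀ r, (if p r then A else if q r then B else 0)
      = (if p r then A else 0) + (if ¬ p r ∧ q r then B else 0) := by
    intro r; by_cases hp : p r <;> by_cases hq : q r <;> simp [hp, hq]
  rw [Finset.sum_congr rfl fun r _ => hpt r, Finset.sum_add_distrib]
  congr 1
  · rw [← Finset.sum_filter, Finset.sum_const, smul_eq_mul, mul_comm]
  · rw [← Finset.sum_filter, Finset.sum_const, smul_eq_mul, mul_comm]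

lemma count_class (n r : ℕ) (hr : r < 5) :
    n / 5 ≤ (Finset.univ.filter (fun y : Fin n => y.val % 5 = r)).card := by
  rcases Nat.eq_zero_or_pos n with h | hpos
  · simp [h]
  have h0 : ∀ m ∈ Finset.range (n / 5), 5 * m + r < n := by
    intro m hm; rw [Finset.mem_range] at hm; omega
  calc n / 5 = (Finset.range (n / 5)).card := (Finset.card_range _).symm
    _ ≤ _ := by
        apply Finset.card_le_card_of_injOn
          (fun m => (⟨(5 * m + r) % n, Nat.mod_lt _ hpos⟩ : Fin n))
        · intro m hm
          simp only [Finset.mem_coe, Finset.mem_filter, Finset.mem_univ, true_and]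
          show (5 * m + r) % n % 5 = r
          rw [Nat.mod_eq_of_lt (h0 m hm)]
          omega
        · intro a ha b hb hab
          simp only [Finset.mem_coe, Finset.mem_range] at ha hb
          have := congrArg Fin.val hab
          simp only [] at this
          rw [Nat.mod_eq_of_lt (h0 a (Finset.mem_range.mpr ha)),
            Nat.mod_eq_of_lt (h0 b (Finset.mem_range.mpr hb))] at this
          omega

lemma mod8_sum (t : ℕ) (g : ℕ → ℕ) :
    ∑ x ∈ Finset.range (8 * t), g (x % 8) = t * ∑ r ∈ Finset.range 8, g r := by
  induction t with
  | zero => simp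
  | succ t ih =>
    have h : 8 * (t + 1) = (((((((8 * t + 1) + 1) + 1) + 1) + 1) + 1) + 1) + 1 := by ring
    rw [h, Finset.sum_range_succ, Finset.sum_range_succ, Finset.sum_range_succ,
      Finset.sum_range_succ, Finset.sum_range_succ, Finset.sum_range_succ,
      Finset.sum_range_succ, Finset.sum_range_succ, ih]
    have e : ∀ j : ℕ, (8 * t + j) % 8 = j % 8 := fun j => by omega
    rw [e 1, e 2, e 3, e 4, e 5, e 6, e 7, show 8 * t % 8 = 0 by omega]
    have h8 : ∑ r ∈ Finset.range 8, g r =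
        g 0 + g 1 + g 2 + g 3 + g 4 + g 5 + g 6 + g 7 := by
      rw [show (8:ℕ) = 7+1 by rfl, Finset.sum_range_succ, Finset.sum_range_succ,
        Finset.sum_range_succ, Finset.sum_range_succ, Finset.sum_range_succ,
        Finset.sum_range_succ, Finset.sum_range_succ, Finset.sum_range_succ,
        Finset.sum_range_zero]
      ring
    rw [h8]
    norm_num
    ring

lemma sum_single_le (n j0 K : ℕ) :
    ∑ y : Fin n, (if y.val = j0 then K else 0) ≤ K := by
  have : ∀ y : Fin n, (if y.val = j0 then K else 0) = K * (if y.val = j0 then 1 else 0) := by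
    intro y; by_cases h : y.val = j0 <;> simp [h]
  rw [Finset.sum_congr rfl fun y _ => this y, ← Finset.mul_sum, Finset.sum_boole]
  have hc : (Finset.univ.filter fun y : Fin n => y.val = j0).card ≤ 1 := by
    apply Finset.card_le_one.mpr
    intro a ha b hb
    simp only [Finset.mem_filter] at ha hb
    exact Fin.ext (ha.2.trans hb.2.symm)
  calc K * ↑(Finset.univ.filter fun y : Fin n => y.val = j0).card ≤ K * 1 := by
        exact Nat.mul_le_mul_left K (by exact_mod_cast hc)
    _ = K := by ring

lemma cyc_succ (M : ℕ) (hM : 8 ≤ M) (h8 : M % 8 = 0) (x : Fin M) :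
    ∃ u : Fin M, (SimpleGraph.cycleGraph M).Adj x u ∧ u.val % 8 = (x.val % 8 + 1) % 8 := by
  by_cases h : x.val + 1 < M
  · refine ⟨⟨x.val + 1, h⟩, ?_, by show (x.val + 1) % 8 = _; omega⟩
    rw [SimpleGraph.cycleGraph_adj']
    right
    rw [Fin.sub_def]
    show (M - x.val + (x.val + 1)) % M = 1
    have h1 : M - x.val + (x.val + 1) = M + 1 := by omega
    rw [h1, Nat.add_mod_left]
    exact Nat.mod_eq_of_lt (by omega)
  · have hx : x.val = M - 1 := by have := x.2; omega
    refine ⟨⟨0, by omega⟩, ?_, by show 0 % 8 = _; omega⟩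
    rw [SimpleGraph.cycleGraph_adj']
    right
    rw [Fin.sub_def]
    show (M - x.val + 0) % M = 1
    have h1 : M - x.val + 0 = 1 := by omega
    rw [h1]
    exact Nat.mod_eq_of_lt (by omega)

lemma cyc_pred (M : ℕ) (hM : 8 ≤ M) (h8 : M % 8 = 0) (x : Fin M) :
    ∃ u : Fin M, (SimpleGraph.cycleGraph M).Adj x u ∧ u.val % 8 = (x.val % 8 + 7) % 8 := by
  by_cases h : 0 < x.val
  · refine ⟨⟨x.val - 1, by omega⟩, ?_, by show (x.val - 1) % 8 = _; omega⟩
    rw [SimpleGraph.cycleGraph_adj']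
    left
    rw [Fin.sub_def]
    show (M - (x.val - 1) + x.val) % M = 1
    have h1 : M - (x.val - 1) + x.val = M + 1 := by have := x.2; omega
    rw [h1, Nat.add_mod_left]
    exact Nat.mod_eq_of_lt (by omega)
  · have hx : x.val = 0 := by omega
    refine ⟨⟨M - 1, by omega⟩, ?_, by show (M-1) % 8 = _; omega⟩
    rw [SimpleGraph.cycleGraph_adj']
    left
    rw [Fin.sub_def]
    show (M - (M - 1) + x.val) % M = 1
    have h1 : M - (M - 1) + x.val = 1 := by omega
    rw [h1]
    exact Nat.mod_eq_of_lt (by omega)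

-- generic [k]-RDF lemma: any ternary-valued function whose zeros have a (k+1)-neighbor
lemma isKRomanDF_of_dom {V : Type*} [Fintype V] (G : SimpleGraph V) (k : ℕ) (hk : 1 ≤ k)
    (f : V → ℕ) (hle : ∀ v, f v ≤ k + 1) (hval : ∀ v, 0 < f v → k ≤ f v)
    (hdom : ∀ v, f v = 0 → ∃ u, G.Adj v u ∧ f u = k + 1) :
    IsKRomanDF G k f := by
  refine ⟨hle, ?_⟩
  intro v hv
  have hv0 : f v = 0 := by
    by_contra h
    exact absurd hv (by have := hval v (Nat.pos_of_ne_zero h); omega)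
  obtain ⟨u0, hadj, hu0⟩ := hdom v hv0
  set A := Finset.univ.filter fun u => G.Adj v u ∧ 0 < f u with hA
  have hu0A : u0 ∈ A := by
    simp only [hA, Finset.mem_filter, Finset.mem_univ, true_and]
    exact ⟨hadj, by omega⟩
  have h1 : ∑ u ∈ A, f u ≤ ∑ u ∈ Finset.univ.filter (fun u => G.Adj v u), f u := by
    apply Finset.sum_le_sum_of_subset
    intro u hu
    simp only [hA, Finset.mem_filter, Finset.mem_univ, true_and] at hu ⊢
    exact hu.1
  have h2 : f u0 + ∑ u ∈ A.erase u0, f u = ∑ u ∈ A, f u := Finset.add_sum_erase _ _ hu0A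
  have h3 : (A.erase u0).card • k ≤ ∑ u ∈ A.erase u0, f u := by
    apply Finset.card_nsmul_le_sum
    intro u hu
    exact hval u (Finset.mem_filter.mp (Finset.mem_of_mem_erase hu)).2.2
  rw [smul_eq_mul, Finset.card_erase_of_mem hu0A] at h3
  have hA1 : 1 ≤ A.card := Nat.one_le_iff_ne_zero.mpr (Finset.card_ne_zero_of_mem hu0A)
  obtain ⟨a', ha'⟩ : ∃ a', A.card = a' + 1 := ⟨A.card - 1, by omega⟩
  rw [ha', Nat.add_sub_cancel] at h3
  have h5 : a' ≤ a' * k := Nat.le_mul_of_pos_right _ hk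
  rw [hv0, ha']
  linarith [h1, h2, h3, h5, hu0 ▸ h2]

set_option maxHeartbeats 1600000 in
lemma core (k t n c ib it ρ : ℕ) (hk : 1 ≤ k) (ht : 1 ≤ t) (hn : 2 ≤ n)
    (hc5 : c < 5) (hρ : ρ = (n - 1) % 5)
    (hr12 : (c + 2) % 5 ≠ (c + 4) % 5)
    (hA : ∀ a, a < 8 → (2 * a) % 5 = (c + 1) % 5 → a ≠ ib → a = 0 ∧ 14 % 5 = c)
    (hB : ∀ a, a < 8 → (2 * a + ρ) % 5 = (c + 4) % 5 → a ≠ it → a = 7 ∧ ρ = c)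
    (hdw : ∀ b, b < 5 →
      ((Finset.range 8).filter (fun r => (2 * r + b) % 5 = c)).card
        + ((Finset.range 8).filter (fun r => ¬((2 * r + b) % 5 = c) ∧
            ((r = 0 ∧ b = (c + 2) % 5) ∨ (r = 7 ∧ b = (c + 4) % 5)))).card = 2)
    (hth : ∀ b, b < 5 → (b = (c + 2) % 5 ∨ b = (c + 4) % 5) →
      1 ≤ ((Finset.range 8).filter (fun r => ¬((2 * r + b) % 5 = c) ∧
            ((r = 0 ∧ b = (c + 2) % 5) ∨ (r = 7 ∧ b = (c + 4) % 5)))).card) :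
    (gammaKR (cylGrid (8 * t) n) k : ℤ) ≤
      (t : ℤ) * (2 * n * (k + 1) + 2 * k) - (t : ℤ) * (((n - 2) / 5 + n / 5 : ℕ) : ℤ) := by
  have hM : 8 ≤ 8 * t := by omega
  have hM8 : (8 * t) % 8 = 0 := by omega
  set F : ℕ → ℕ → ℕ := fun r j =>
    if (2 * r + j % 5) % 5 = c then k + 1
    else if ((r = 0 ∧ j % 5 = (c + 2) % 5) ∨ (r = 7 ∧ j % 5 = (c + 4) % 5) ∨
      (j = 0 ∧ r = ib) ∨ (j = n - 1 ∧ r = it)) then k else 0 with hF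
  set f : Fin (8 * t) × Fin n → ℕ := fun v => F (v.1.val % 8) v.2.val with hf
  -- value facts
  have hF_le : ∀ r j, F r j ≤ k + 1 := by
    intro r j; rw [hF]; dsimp only; split
    · exact le_refl _
    · split; · omega
      · omega
  have hF_pos : ∀ r j, 0 < F r j → k ≤ F r j := by
    intro r j; rw [hF]; dsimp only; split
    · intro _; omega
    · split
      · intro _; exact le_refl _
      · intro h; omega
  -- domination
  have hdom : ∀ v : Fin (8 * t) × Fin n, f v = 0 →
      ∃ u, (cylGrid (8 * t) n).Adj v u ∧ f u = k + 1 := by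
    rintro ⟨x, y⟩ hv
    have hD : ¬((2 * (x.val % 8) + y.val % 5) % 5 = c) := by
      intro h; rw [hf] at hv; dsimp only at hv; rw [hF] at hv; dsimp only at hv
      rw [if_pos h] at hv; omega
    have hW : ¬((x.val % 8 = 0 ∧ y.val % 5 = (c + 2) % 5) ∨
        (x.val % 8 = 7 ∧ y.val % 5 = (c + 4) % 5) ∨
        (y.val = 0 ∧ x.val % 8 = ib) ∨ (y.val = n - 1 ∧ x.val % 8 = it)) := by
      intro h; rw [hf] at hv; dsimp only at hv; rw [hF] at hv; dsimp only at hv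
      rw [if_neg hD, if_pos h] at hv; omega
    have ha8 : x.val % 8 < 8 := Nat.mod_lt _ (by norm_num)
    have hb5 : y.val % 5 < 5 := Nat.mod_lt _ (by norm_num)
    have hyn : y.val < n := y.2
    have hcase : (2 * (x.val % 8) + y.val % 5) % 5 = (c + 1) % 5 ∨
        (2 * (x.val % 8) + y.val % 5) % 5 = (c + 2) % 5 ∨
        (2 * (x.val % 8) + y.val % 5) % 5 = (c + 3) % 5 ∨
        (2 * (x.val % 8) + y.val % 5) % 5 = (c + 4) % 5 := by omega
    have hval_of : ∀ (u : Fin (8 * t)) (z : Fin n),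
        (2 * (u.val % 8) + z.val % 5) % 5 = c → f (u, z) = k + 1 := by
      intro u z h; rw [hf]; dsimp only; rw [hF]; dsimp only; rw [if_pos h]
    rcases hcase with h1 | h2 | h3 | h4
    · -- dominator below (j-1)
      by_cases hy0 : y.val = 0
      · have hAa := hA (x.val % 8) ha8 (by omega)
          (fun hib => hW (Or.inr (Or.inr (Or.inl ⟨hy0, hib⟩))))
        obtain ⟨ha0, hc14⟩ := hAa
        obtain ⟨u1, hadj, hres⟩ := cyc_pred (8 * t) hM hM8 x
        have hres7 : u1.val % 8 = 7 := by omega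
        refine ⟨(u1, y), ?_, hval_of u1 y (by omega)⟩
        exact SimpleGraph.boxProd_adj.mpr (Or.inl ⟨hadj, rfl⟩)
      · have hyy : y.val - 1 < n := by omega
        have hpadj : (SimpleGraph.pathGraph n).Adj y ⟨y.val - 1, hyy⟩ := by
          rw [SimpleGraph.pathGraph_adj]
          right
          show (y.val - 1) + 1 = y.val
          omega
        exact ⟨(x, ⟨y.val - 1, hyy⟩), SimpleGraph.boxProd_adj.mpr (Or.inr ⟨hpadj, rfl⟩),
          hval_of x _ (by show (2*(x.val%8) + (y.val-1)%5)%5 = c; omega)⟩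
    · -- dominator left (i-1)
      by_cases ha0 : x.val % 8 = 0
      · exact absurd (Or.inl ⟨ha0, by omega⟩) hW
      · obtain ⟨u1, hadj, hres⟩ := cyc_pred (8 * t) hM hM8 x
        have hres' : u1.val % 8 = x.val % 8 - 1 := by omega
        exact ⟨(u1, y), SimpleGraph.boxProd_adj.mpr (Or.inl ⟨hadj, rfl⟩),
          hval_of u1 y (by omega)⟩
    · -- dominator right (i+1)
      by_cases ha7 : x.val % 8 = 7
      · exact absurd (Or.inr (Or.inl ⟨ha7, by omega⟩)) hW
      · obtain ⟨u1, hadj, hres⟩ := cyc_succ (8 * t) hM hM8 x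
        have hres' : u1.val % 8 = x.val % 8 + 1 := by omega
        exact ⟨(u1, y), SimpleGraph.boxProd_adj.mpr (Or.inl ⟨hadj, rfl⟩),
          hval_of u1 y (by omega)⟩
    · -- dominator above (j+1)
      by_cases hyl : y.val + 1 < n
      · have hpadj : (SimpleGraph.pathGraph n).Adj y ⟨y.val + 1, hyl⟩ := by
          rw [SimpleGraph.pathGraph_adj]
          left
          show y.val + 1 = y.val + 1
          rfl
        exact ⟨(x, ⟨y.val + 1, hyl⟩), SimpleGraph.boxProd_adj.mpr (Or.inr ⟨hpadj, rfl⟩),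
          hval_of x _ (by show (2*(x.val%8) + (y.val+1)%5)%5 = c; omega)⟩
      · have hy : y.val = n - 1 := by omega
        have hBa := hB (x.val % 8) ha8 (by omega)
          (fun hit => hW (Or.inr (Or.inr (Or.inr ⟨hy, hit⟩))))
        obtain ⟨ha7, hρc⟩ := hBa
        obtain ⟨u1, hadj, hres⟩ := cyc_succ (8 * t) hM hM8 x
        have hres0 : u1.val % 8 = 0 := by omega
        exact ⟨(u1, y), SimpleGraph.boxProd_adj.mpr (Or.inl ⟨hadj, rfl⟩),
          hval_of u1 y (by omega)⟩
  have hRDF : IsKRomanDF (cylGrid (8 * t) n) k f :=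
    isKRomanDF_of_dom _ k hk f (fun v => hF_le _ _) (fun v => hF_pos _ _) hdom
  -- reorganize the sum
  have hsum : ∑ v : Fin (8 * t) × Fin n, f v
      = t * ∑ y : Fin n, ∑ r ∈ Finset.range 8, F r y.val := by
    rw [Fintype.sum_prod_type_right, Finset.mul_sum]
    apply Finset.sum_congr rfl
    intro y _
    have h1 : ∑ x : Fin (8 * t), f (x, y) = ∑ i ∈ Finset.range (8 * t), F (i % 8) y.val :=
      Fin.sum_univ_eq_sum_range (fun i => F (i % 8) y.val) (8 * t)
    rw [h1]
    exact mod8_sum t fun r => F r y.val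
  -- per-column bound
  have hcol : ∀ y : Fin n, (∑ r ∈ Finset.range 8, F r y.val)
      + ((Finset.range 8).filter (fun r => ¬((2 * r + y.val % 5) % 5 = c) ∧
          ((r = 0 ∧ y.val % 5 = (c + 2) % 5) ∨ (r = 7 ∧ y.val % 5 = (c + 4) % 5)))).card
      ≤ 2 * (k + 1) + (if y.val = 0 then k else 0) + (if y.val = n - 1 then k else 0) := by
    intro y
    have hb5 : y.val % 5 < 5 := by omega
    have hdwb := hdw _ hb5
    simp only [hF]
    rw [sum_ite_ite (Finset.range 8) (fun r => (2 * r + y.val % 5) % 5 = c)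
      (fun r => ((r = 0 ∧ y.val % 5 = (c + 2) % 5) ∨ (r = 7 ∧ y.val % 5 = (c + 4) % 5) ∨
        (y.val = 0 ∧ r = ib) ∨ (y.val = n - 1 ∧ r = it))) (k + 1) k]
    set d := ((Finset.range 8).filter (fun r => (2 * r + y.val % 5) % 5 = c)).card with hd
    set ws := ((Finset.range 8).filter (fun r => ¬((2 * r + y.val % 5) % 5 = c) ∧
        ((r = 0 ∧ y.val % 5 = (c + 2) % 5) ∨ (r = 7 ∧ y.val % 5 = (c + 4) % 5)))).card with hws
    set wf := ((Finset.range 8).filter (fun r => ¬((2 * r + y.val % 5) % 5 = c) ∧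
        ((r = 0 ∧ y.val % 5 = (c + 2) % 5) ∨ (r = 7 ∧ y.val % 5 = (c + 4) % 5) ∨
        (y.val = 0 ∧ r = ib) ∨ (y.val = n - 1 ∧ r = it)))).card with hwf
    by_cases h0 : y.val = 0 <;> by_cases h1 : y.val = n - 1
    · omega
    · -- first column
      rw [if_pos h0, if_neg h1]
      have hsub : wf ≤ ws + 1 := by
        rw [hwf, hws]
        calc ((Finset.range 8).filter _).card
            ≤ (((Finset.range 8).filter (fun r => ¬((2 * r + y.val % 5) % 5 = c) ∧
              ((r = 0 ∧ y.val % 5 = (c + 2) % 5) ∨ (r = 7 ∧ y.val % 5 = (c + 4) % 5)))) ∪ {ib}).card := by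
              apply Finset.card_le_card
              intro r hr
              simp only [Finset.mem_filter, Finset.mem_union, Finset.mem_singleton] at hr ⊢
              tauto
          _ ≤ _ + 1 := le_trans (Finset.card_union_le _ _) (by simp)
      have h2 : k * wf ≤ k * ws + k * 1 := by
        rw [← Nat.mul_add]; exact Nat.mul_le_mul_left k hsub
      have h3 : (k + 1) * d + (k + 1) * ws = (k + 1) * 2 := by
        rw [← Nat.mul_add, hdwb]
      linarith
    · -- last column
      rw [if_neg h0, if_pos h1]
      have hsub : wf ≤ ws + 1 := by
        rw [hwf, hws]
        calc ((Finset.range 8).filter _).card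
            ≤ (((Finset.range 8).filter (fun r => ¬((2 * r + y.val % 5) % 5 = c) ∧
              ((r = 0 ∧ y.val % 5 = (c + 2) % 5) ∨ (r = 7 ∧ y.val % 5 = (c + 4) % 5)))) ∪ {it}).card := by
              apply Finset.card_le_card
              intro r hr
              simp only [Finset.mem_filter, Finset.mem_union, Finset.mem_singleton] at hr ⊢
              tauto
          _ ≤ _ + 1 := le_trans (Finset.card_union_le _ _) (by simp)
      have h2 : k * wf ≤ k * ws + k * 1 := by
        rw [← Nat.mul_add]; exact Nat.mul_le_mul_left k hsub
      have h3 : (k + 1) * d + (k + 1) * ws = (k + 1) * 2 := by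
        rw [← Nat.mul_add, hdwb]
      linarith
    · -- interior column
      rw [if_neg h0, if_neg h1]
      have hsub : wf ≤ ws := by
        rw [hwf, hws]
        apply Finset.card_le_card
        intro r hr
        simp only [Finset.mem_filter] at hr ⊢
        tauto
      have h2 : k * wf ≤ k * ws := Nat.mul_le_mul_left k hsub
      have h3 : (k + 1) * d + (k + 1) * ws = (k + 1) * 2 := by
        rw [← Nat.mul_add, hdwb]
      linarith
  -- thin-column count
  have hT : 2 * (n / 5) ≤ ∑ y : Fin n,
      ((Finset.range 8).filter (fun r => ¬((2 * r + y.val % 5) % 5 = c) ∧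
        ((r = 0 ∧ y.val % 5 = (c + 2) % 5) ∨ (r = 7 ∧ y.val % 5 = (c + 4) % 5)))).card := by
    have hpt : ∀ y : Fin n, (if y.val % 5 = (c + 2) % 5 then 1 else 0)
        + (if y.val % 5 = (c + 4) % 5 then 1 else 0)
        ≤ ((Finset.range 8).filter (fun r => ¬((2 * r + y.val % 5) % 5 = c) ∧
          ((r = 0 ∧ y.val % 5 = (c + 2) % 5) ∨ (r = 7 ∧ y.val % 5 = (c + 4) % 5)))).card := by
      intro y
      by_cases e1 : y.val % 5 = (c + 2) % 5 <;> by_cases e2 : y.val % 5 = (c + 4) % 5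
      · exact absurd (e1 ▸ e2) hr12
      · rw [if_pos e1, if_neg e2]
        exact hth _ (by omega) (Or.inl e1)
      · rw [if_neg e1, if_pos e2]
        exact hth _ (by omega) (Or.inr e2)
      · rw [if_neg e1, if_neg e2]
        exact Nat.zero_le _
    calc 2 * (n / 5) = n / 5 + n / 5 := by ring
      _ ≤ (Finset.univ.filter (fun y : Fin n => y.val % 5 = (c + 2) % 5)).card
          + (Finset.univ.filter (fun y : Fin n => y.val % 5 = (c + 4) % 5)).card :=
          Nat.add_le_add (count_class n _ (by omega)) (count_class n _ (by omega))
      _ = ∑ y : Fin n, ((if y.val % 5 = (c + 2) % 5 then 1 else 0)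
          + (if y.val % 5 = (c + 4) % 5 then 1 else 0)) := by
          rw [Finset.sum_add_distrib, Finset.sum_boole, Finset.sum_boole]
          norm_num
      _ ≤ _ := Finset.sum_le_sum fun y _ => hpt y
  -- total column sum bound
  have hcolsum : (∑ y : Fin n, ∑ r ∈ Finset.range 8, F r y.val) + 2 * (n / 5)
      ≤ 2 * n * (k + 1) + 2 * k := by
    have hs1 := Finset.sum_le_sum (fun y (_ : y ∈ Finset.univ) => hcol y)
    rw [Finset.sum_add_distrib] at hs1
    have hs2 : ∑ y : Fin n, (2 * (k + 1) + (if y.val = 0 then k else 0)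
        + (if y.val = n - 1 then k else 0))
        ≤ n * (2 * (k + 1)) + k + k := by
      rw [Finset.sum_add_distrib, Finset.sum_add_distrib, Finset.sum_const,
        Finset.card_univ, Fintype.card_fin, smul_eq_mul]
      have := sum_single_le n 0 k
      have := sum_single_le n (n - 1) k
      omega
    have := le_trans hs1 hs2
    have h9 := le_trans (Nat.add_le_add_left hT _) this
    nlinarith
  -- conclude
  have hle : gammaKR (cylGrid (8 * t) n) k ≤ ∑ v, f v := Nat.sInf_le ⟨f, hRDF, rfl⟩
  have hS : (n - 2) / 5 + n / 5 ≤ 2 * (n / 5) := by omega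
  have h9 : (∑ y : Fin n, ∑ r ∈ Finset.range 8, F r y.val) + ((n - 2) / 5 + n / 5)
      ≤ 2 * n * (k + 1) + 2 * k :=
    le_trans (Nat.add_le_add_left hS _) hcolsum
  have h10 : ((∑ y : Fin n, ∑ r ∈ Finset.range 8, F r y.val : ℕ) : ℤ)
      + (((n - 2) / 5 + n / 5 : ℕ) : ℤ) ≤ 2 * n * (k + 1) + 2 * k := by
    exact_mod_cast h9
  calc (gammaKR (cylGrid (8 * t) n) k : ℤ) ≤ ((∑ v, f v : ℕ) : ℤ) := by exact_mod_cast hle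
    _ = (t : ℤ) * ((∑ y : Fin n, ∑ r ∈ Finset.range 8, F r y.val : ℕ) : ℤ) := by
        exact_mod_cast hsum
    _ ≤ (t : ℤ) * (2 * n * (k + 1) + 2 * k - (((n - 2) / 5 + n / 5 : ℕ) : ℤ)) := by
        apply mul_le_mul_of_nonneg_left _ (by positivity)
        linarith
    _ = (t : ℤ) * (2 * n * (k + 1) + 2 * k) - (t : ℤ) * (((n - 2) / 5 + n / 5 : ℕ) : ℤ) := by
        ring

theorem gammaKR_C8t (k t n : ℕ) (hk : 1 ≤ k) (ht : 1 ≤ t) (hn : 2 ≤ n) :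
    (gammaKR (cylGrid (8 * t) n) k : ℤ) ≤
      (t : ℤ) * (2 * (n : ℤ) * ((k : ℤ) + 1) -
        (⌊((n : ℚ) - 2) / 5⌋ + ⌊(n : ℚ) / 5⌋) + 2 * (k : ℤ)) := by
  have hf1 : ⌊((n : ℚ) - 2) / 5⌋ = (((n - 2) / 5 : ℕ) : ℤ) := by
    have h1 : ((n : ℚ) - 2) = ((n - 2 : ℕ) : ℚ) := by
      push_cast [Nat.cast_sub hn]
      ring
    rw [h1, show (5 : ℚ) = ((5 : ℕ) : ℚ) by norm_num,
      Rat.floor_natCast_div_natCast]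
    omega
  have hf2 : ⌊(n : ℚ) / 5⌋ = ((n / 5 : ℕ) : ℤ) := by
    rw [show (5 : ℚ) = ((5 : ℕ) : ℚ) by norm_num, Rat.floor_natCast_div_natCast]
    omega
  have key : (gammaKR (cylGrid (8 * t) n) k : ℤ) ≤
      (t : ℤ) * (2 * n * (k + 1) + 2 * k) - (t : ℤ) * (((n - 2) / 5 + n / 5 : ℕ) : ℤ) := by
    have h5 : n % 5 = 0 ∨ n % 5 = 1 ∨ n % 5 = 2 ∨ n % 5 = 3 ∨ n % 5 = 4 := by omega
    rcases h5 with h | h | h | h | h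
    · exact core k t n 4 5 2 4 hk ht hn (by norm_num) (by omega) (by decide)
        (by decide) (by decide) (by decide) (by decide)
    · exact core k t n 0 3 2 0 hk ht hn (by norm_num) (by omega) (by decide)
        (by decide) (by decide) (by decide) (by decide)
    · exact core k t n 0 3 4 1 hk ht hn (by norm_num) (by omega) (by decide)
        (by decide) (by decide) (by decide) (by decide)
    · exact core k t n 2 4 2 2 hk ht hn (by norm_num) (by omega) (by decide)
        (by decide) (by decide) (by decide) (by decide)
    · exact core k t n 0 3 3 3 hk ht hn (by norm_num) (by omega) (by decide)
        (by decide) (by decide) (by decide) (by decide)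
  calc (gammaKR (cylGrid (8 * t) n) k : ℤ) ≤
      (t : ℤ) * (2 * n * (k + 1) + 2 * k) - (t : ℤ) * (((n - 2) / 5 + n / 5 : ℕ) : ℤ) := key
    _ = (t : ℤ) * (2 * (n : ℤ) * ((k : ℤ) + 1) -
        (⌊((n : ℚ) - 2) / 5⌋ + ⌊(n : ℚ) / 5⌋) + 2 * (k : ℤ)) := by
      rw [hf1, hf2]
      push_cast
      ring
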